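/- Let (Ω, F, P) be a probability space and let A : Ω → Matrix(Fin m, Fin n, ℂ), y : Ω → (Fin m → ℂ), and x : Ω → (Fin n → ℂ) be mutually independent random objects whose entries are square-integrable. Assume additionally that the columns a_1, …, a_n of A are mutually independent random vectors. Write ⟨A⟩, ⟨y⟩, ⟨x⟩ for the entrywise expectations, Σ_{a_i} = E[(a_i − ⟨a_i⟩)(a_i − ⟨a_i⟩)^H], Σ_y = E[(y − ⟨y⟩)(y − ⟨y⟩)^H], Σ_x = E[(x − ⟨x⟩)(x − ⟨x⟩)^H]. Let B be an m×m Hermitian complex matrix and set D = diag(Tr(B Σ_{a_1}), …, Tr(B Σ_{a_n})). Then E[(y − A x)^H B (y − A x)] = (⟨y⟩ − ⟨A⟩⟨x⟩)^H B (⟨y⟩ − ⟨A⟩⟨x⟩) + Tr(B Σ_y) + ⟨x⟩^H D ⟨x⟩ + Tr(Σ_x D) + Tr(Σ_x ⟨A⟩^H B ⟨A⟩). -/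

import Mathlib

open MeasureTheory ProbabilityTheory Matrix

/-- Matrices inherit the product measurable structure of `m → n → α`. -/
instance matrixMeasurableSpace {m n α : Type*} [MeasurableSpace α] :
    MeasurableSpace (Matrix m n α) :=
  inferInstanceAs (MeasurableSpace (m → n → α))

section Helpers
variable {Ω : Type*} [MeasurableSpace Ω] {P : Measure Ω} [IsProbabilityMeasure P]


variable {Ω : Type*} [MeasurableSpace Ω] {P : Measure Ω} [IsProbabilityMeasure P]

/-- product of two L2 functions is integrable -/
lemma l2_mul_integrable {f g : Ω → ℂ} (hf : MemLp f 2 P) (hg : MemLp g 2 P) :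
    Integrable (fun ω => f ω * g ω) P := by
  have h := hg.smul (φ := f) hf (r := 1) (hpqr := ⟨by rw [inv_one]; exact ENNReal.inv_two_add_inv_two⟩)
  rw [memLp_one_iff_integrable] at h
  exact h

lemma l2_conj {f : Ω → ℂ} (hf : MemLp f 2 P) :
    MemLp (fun ω => star (f ω)) 2 P := by
  refine ⟨?_, ?_⟩
  · exact RCLike.continuous_conj.comp_aestronglyMeasurable hf.1
  · simpa only [RCLike.star_def] using (eLpNorm_conj f 2 P) ▸ hf.2

/-- Integral of product of independent complex random variables factorizes. -/
lemma indep_integral_mul {X Y : Ω → ℂ} (h : IndepFun X Y P) (hX : Integrable X P)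
    (hY : Integrable Y P) : ∫ ω, X ω * Y ω ∂P = (∫ ω, X ω ∂P) * ∫ ω, Y ω ∂P := by
  have hXY : Integrable (fun ω => X ω * Y ω) P := h.integrable_mul hX hY
  have hrr : IndepFun (fun ω => RCLike.re (X ω)) (fun ω => RCLike.re (Y ω)) P :=
    h.comp RCLike.measurable_re RCLike.measurable_re
  have hri : IndepFun (fun ω => RCLike.re (X ω)) (fun ω => RCLike.im (Y ω)) P :=
    h.comp RCLike.measurable_re RCLike.measurable_im
  have hir : IndepFun (fun ω => RCLike.im (X ω)) (fun ω => RCLike.re (Y ω)) P :=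
    h.comp RCLike.measurable_im RCLike.measurable_re
  have hii : IndepFun (fun ω => RCLike.im (X ω)) (fun ω => RCLike.im (Y ω)) P :=
    h.comp RCLike.measurable_im RCLike.measurable_im
  have iXr : Integrable (fun ω => RCLike.re (X ω)) P := hX.re
  have iXi : Integrable (fun ω => RCLike.im (X ω)) P := hX.im
  have iYr : Integrable (fun ω => RCLike.re (Y ω)) P := hY.re
  have iYi : Integrable (fun ω => RCLike.im (Y ω)) P := hY.im
  have irr : Integrable (fun ω => RCLike.re (X ω) * RCLike.re (Y ω)) P := hrr.integrable_mul iXr iYr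
  have iri : Integrable (fun ω => RCLike.re (X ω) * RCLike.im (Y ω)) P := hri.integrable_mul iXr iYi
  have iir : Integrable (fun ω => RCLike.im (X ω) * RCLike.re (Y ω)) P := hir.integrable_mul iXi iYr
  have iii : Integrable (fun ω => RCLike.im (X ω) * RCLike.im (Y ω)) P := hii.integrable_mul iXi iYi
  have err : (∫ ω, RCLike.re (X ω) * RCLike.re (Y ω) ∂P)
      = (∫ ω, RCLike.re (X ω) ∂P) * ∫ ω, RCLike.re (Y ω) ∂P :=
    hrr.integral_mul_eq_mul_integral iXr.1 iYr.1
  have eri : (∫ ω, RCLike.re (X ω) * RCLike.im (Y ω) ∂P)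
      = (∫ ω, RCLike.re (X ω) ∂P) * ∫ ω, RCLike.im (Y ω) ∂P :=
    hri.integral_mul_eq_mul_integral iXr.1 iYi.1
  have eir : (∫ ω, RCLike.im (X ω) * RCLike.re (Y ω) ∂P)
      = (∫ ω, RCLike.im (X ω) ∂P) * ∫ ω, RCLike.re (Y ω) ∂P :=
    hir.integral_mul_eq_mul_integral iXi.1 iYr.1
  have eii : (∫ ω, RCLike.im (X ω) * RCLike.im (Y ω) ∂P)
      = (∫ ω, RCLike.im (X ω) ∂P) * ∫ ω, RCLike.im (Y ω) ∂P :=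
    hii.integral_mul_eq_mul_integral iXi.1 iYi.1
  apply RCLike.ext
  · rw [← integral_re hXY]
    simp only [RCLike.mul_re]
    rw [integral_sub irr iii, err, eii, integral_re hX, integral_re hY,
      integral_im hX, integral_im hY]
  · rw [← integral_im hXY]
    simp only [RCLike.mul_im]
    rw [integral_add iri iir, eri, eir, integral_re hX, integral_re hY,
      integral_im hX, integral_im hY]

/-- Covariance expansion. -/
lemma cov_expand {f g : Ω → ℂ} (hf : MemLp f 2 P) (hg : MemLp g 2 P) {mf mg : ℂ}
    (hmf : mf = ∫ ω, f ω ∂P) (hmg : mg = ∫ ω, g ω ∂P) :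
    ∫ ω, (f ω - mf) * star (g ω - mg) ∂P
      = (∫ ω, f ω * star (g ω) ∂P) - mf * star mg := by
  have hif : Integrable f P := hf.integrable one_le_two
  have hig : Integrable (fun ω => star (g ω)) P := (l2_conj hg).integrable one_le_two
  have h1 : Integrable (fun ω => f ω * star (g ω)) P := l2_mul_integrable hf (l2_conj hg)
  have h2 : Integrable (fun ω => f ω * star mg) P := hif.mul_const _
  have h3 : Integrable (fun ω => mf * star (g ω)) P := hig.const_mul _
  have key : ∀ ω, (f ω - mf) * star (g ω - mg)
      = f ω * star (g ω) - f ω * star mg - (mf * star (g ω) - mf * star mg) := by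
    intro ω; simp only [star_sub]; ring
  rw [integral_congr_ae (Filter.Eventually.of_forall key)]
  have h12 : Integrable (fun ω => f ω * star (g ω) - f ω * star mg) P := h1.sub h2
  have h34 : Integrable (fun ω => mf * star (g ω) - mf * star mg) P :=
    h3.sub (integrable_const _)
  rw [integral_sub h12 h34, integral_sub h1 h2, integral_sub h3 (integrable_const _)]
  have e1 : ∫ ω, star (g ω) ∂P = star mg := by
    simp only [RCLike.star_def] at *
    rw [integral_conj, ← hmg]
  rw [integral_mul_const, integral_const_mul, integral_const, e1, ← hmf]
  simp [measure_univ]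

lemma set_ae_of_comap {Ω β : Type*} [MeasurableSpace Ω] [mβ : MeasurableSpace β]
    {μ : Measure Ω} {g g' : Ω → β} (hgg' : g =ᵐ[μ] g') {s : Set Ω}
    (hs : MeasurableSet[MeasurableSpace.comap g' mβ] s) :
    ∃ t, MeasurableSet[MeasurableSpace.comap g mβ] t ∧ s =ᵐ[μ] t := by
  obtain ⟨T, hT, rfl⟩ := hs
  refine ⟨g ⁻¹' T, ⟨T, hT, rfl⟩, ?_⟩
  rw [Filter.eventuallyEq_set]
  filter_upwards [hgg'] with ω h
  show g' ω ∈ T ↔ g ω ∈ T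
  rw [h]

lemma iIndep_congr_ae {ι Ω : Type*} [MeasurableSpace Ω] {μ : Measure Ω}
    [IsProbabilityMeasure μ] {m m' : ι → MeasurableSpace Ω}
    (h : ProbabilityTheory.iIndep m μ)
    (hmm' : ∀ i (s : Set Ω), MeasurableSet[m' i] s → ∃ t, MeasurableSet[m i] t ∧ s =ᵐ[μ] t) :
    ProbabilityTheory.iIndep m' μ := by
  rw [ProbabilityTheory.iIndep_iff] at h ⊢
  intro s f hf
  have hch : ∀ i, ∃ t, i ∈ s → MeasurableSet[m i] t ∧ f i =ᵐ[μ] t := by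
    intro i
    by_cases hi : i ∈ s
    · obtain ⟨t, ht, hae⟩ := hmm' i (f i) (hf i hi)
      exact ⟨t, fun _ => ⟨ht, hae⟩⟩
    · exact ⟨∅, fun hc => absurd hc hi⟩
  choose t ht using hch
  have hae : ∀ i ∈ s, f i =ᵐ[μ] t i := fun i hi => (ht i hi).2
  have h1 : (⋂ i ∈ s, f i) =ᵐ[μ] (⋂ i ∈ s, t i) := by
    have h2 : ∀ᵐ ω ∂μ, ∀ i ∈ (s : Set ι), ω ∈ f i ↔ ω ∈ t i := by
      rw [MeasureTheory.ae_ball_iff s.countable_toSet]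
      exact fun i hi => Filter.eventuallyEq_set.1 (hae i (Finset.mem_coe.1 hi))
    rw [Filter.eventuallyEq_set]
    filter_upwards [h2] with ω hω
    simp only [Set.mem_iInter]
    exact ⟨fun hh i hi => (hω i (Finset.mem_coe.2 hi)).1 (hh i hi),
      fun hh i hi => (hω i (Finset.mem_coe.2 hi)).2 (hh i hi)⟩
  rw [measure_congr h1, h s (f := t) (fun i hi => (ht i hi).1)]
  exact Finset.prod_congr rfl fun i hi => (measure_congr (hae i hi)).symm

lemma algebra_key {n : ℕ} (syqp myq myp : ℂ) (mAp mAq mxv : Fin n → ℂ)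
    (Sxm : Matrix (Fin n) (Fin n) ℂ) (Saqp : Fin n → ℂ) :
    (syqp + myq * star myp) - (∑ j, star myp * (mAq j * mxv j))
      - ((∑ i, star (mAp i) * star (mxv i) * myq)
        - ∑ i, ∑ j, (star (mAp i) * mAq j + ite (i = j) (Saqp i) 0)
            * (Sxm j i + mxv j * star (mxv i)))
    = star (myp - ∑ i, mAp i * mxv i) * (myq - ∑ j, mAq j * mxv j) + syqp
      + (∑ i, Saqp i * (Sxm i i + mxv i * star (mxv i)))
      + ∑ i, ∑ j, star (mAp i) * mAq j * Sxm j i := by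
  have e1 : ∑ i, ∑ j, (star (mAp i) * mAq j + ite (i = j) (Saqp i) 0)
        * (Sxm j i + mxv j * star (mxv i))
      = ((∑ i, ∑ j, star (mAp i) * mAq j * Sxm j i)
        + ∑ i, ∑ j, (star (mAp i) * star (mxv i)) * (mAq j * mxv j))
        + ∑ i, Saqp i * (Sxm i i + mxv i * star (mxv i)) := by
    have h : ∀ i j : Fin n, (star (mAp i) * mAq j + ite (i = j) (Saqp i) 0)
          * (Sxm j i + mxv j * star (mxv i))
        = (star (mAp i) * mAq j * Sxm j i
            + (star (mAp i) * star (mxv i)) * (mAq j * mxv j))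
          + ite (i = j) (Saqp i * (Sxm j i + mxv j * star (mxv i))) 0 := by
      intro i j
      by_cases hij : i = j
      · subst hij; simp only [if_true, eq_self_iff_true]; ring
      · simp only [if_neg hij]; ring
    simp_rw [h, Finset.sum_add_distrib, Finset.sum_ite_eq, Finset.mem_univ, if_pos]
  have e2 : (∑ i, star (mAp i) * star (mxv i)) * (∑ j, mAq j * mxv j)
      = ∑ i, ∑ j, (star (mAp i) * star (mxv i)) * (mAq j * mxv j) :=
    Finset.sum_mul_sum _ _ _ _
  have e3 : star (myp - ∑ i, mAp i * mxv i)
      = star myp - ∑ i, star (mAp i) * star (mxv i) := by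
    rw [star_sub, star_sum]
    simp only [star_mul']
  rw [e1, e3, sub_mul, mul_sub, mul_sub, Finset.mul_sum, Finset.sum_mul, e2]
  ring

lemma integral_star_eq {f : Ω → ℂ} {c : ℂ} (h : c = ∫ ω, f ω ∂P) :
    ∫ ω, star (f ω) ∂P = star c := by
  simp only [RCLike.star_def]
  rw [integral_conj, h]

lemma moment2 {f g : Ω → ℂ} (hf : MemLp f 2 P) (hg : MemLp g 2 P) {mf mg S : ℂ}
    (hmf : mf = ∫ ω, f ω ∂P) (hmg : mg = ∫ ω, g ω ∂P)
    (hS : S = ∫ ω, (f ω - mf) * star (g ω - mg) ∂P) :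
    ∫ ω, star (g ω) * f ω ∂P = S + mf * star mg := by
  have hc : ∫ ω, star (g ω) * f ω ∂P = ∫ ω, f ω * star (g ω) ∂P :=
    integral_congr_ae (Filter.Eventually.of_forall fun ω => mul_comm _ _)
  rw [hc, hS, cov_expand hf hg hmf hmg]
  ring

end Helpers

section MatrixAlg
lemma quad_expand {k : ℕ} (B : Matrix (Fin k) (Fin k) ℂ) (v : Fin k → ℂ) :
    star v ⬝ᵥ (B *ᵥ v) = ∑ p, ∑ q, B p q * (star (v p) * v q) := by
  simp only [dotProduct, mulVec, Pi.star_apply, Finset.mul_sum]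
  exact Finset.sum_congr rfl fun p _ => Finset.sum_congr rfl fun q _ => by ring

lemma sum_swap3 {k l r : ℕ} {M : Type*} [AddCommMonoid M] (f : Fin k → Fin l → Fin r → M) :
    ∑ p, ∑ q, ∑ i, f p q i = ∑ i, ∑ p, ∑ q, f p q i := by
  have h1 : ∑ p, ∑ q, ∑ i, f p q i = ∑ p, ∑ i, ∑ q, f p q i :=
    Finset.sum_congr rfl fun p _ => Finset.sum_comm
  rw [h1]
  exact Finset.sum_comm

lemma final_matrix {m n : ℕ} (B : Matrix (Fin m) (Fin m) ℂ) (mA : Matrix (Fin m) (Fin n) ℂ)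
    (my : Fin m → ℂ) (mx : Fin n → ℂ) (Sa : Fin n → Matrix (Fin m) (Fin m) ℂ)
    (Sy : Matrix (Fin m) (Fin m) ℂ) (Sx : Matrix (Fin n) (Fin n) ℂ)
    (D : Matrix (Fin n) (Fin n) ℂ) (hD : D = Matrix.diagonal fun i => (B * Sa i).trace) :
    ∑ p, ∑ q, B p q * (star (my p - ∑ i, mA p i * mx i) * (my q - ∑ j, mA q j * mx j) + Sy q p
      + (∑ i, Sa i q p * (Sx i i + mx i * star (mx i)))
      + ∑ i, ∑ j, star (mA p i) * mA q j * Sx j i)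
    = star (my - mA *ᵥ mx) ⬝ᵥ (B *ᵥ (my - mA *ᵥ mx)) + (B * Sy).trace +
      star mx ⬝ᵥ (D *ᵥ mx) + (Sx * D).trace + (Sx * (mAᴴ * B * mA)).trace := by
  subst hD
  have he : ∀ p, (my - mA *ᵥ mx) p = my p - ∑ i, mA p i * mx i := by
    intro p; simp [mulVec, dotProduct]
  have t1 : star (my - mA *ᵥ mx) ⬝ᵥ (B *ᵥ (my - mA *ᵥ mx))
      = ∑ p, ∑ q, B p q * (star (my p - ∑ i, mA p i * mx i) * (my q - ∑ j, mA q j * mx j)) := by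
    rw [quad_expand]
    exact Finset.sum_congr rfl fun p _ => Finset.sum_congr rfl fun q _ => by rw [he, he]
  have t2 : (B * Sy).trace = ∑ p, ∑ q, B p q * Sy q p := by
    simp [Matrix.trace, Matrix.mul_apply, Matrix.diag]
  have tr_i : ∀ i : Fin n, (B * Sa i).trace = ∑ p, ∑ q, B p q * Sa i q p := by
    intro i; simp [Matrix.trace, Matrix.mul_apply, Matrix.diag]
  have t3 : ∑ p, ∑ q, B p q * ∑ i, Sa i q p * (mx i * star (mx i))
      = star mx ⬝ᵥ ((Matrix.diagonal fun i => (B * Sa i).trace) *ᵥ mx) := by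
    calc ∑ p, ∑ q, B p q * ∑ i, Sa i q p * (mx i * star (mx i))
        = ∑ p, ∑ q, ∑ i, B p q * (Sa i q p * (mx i * star (mx i))) := by
          simp_rw [Finset.mul_sum]
      _ = ∑ i, ∑ p, ∑ q, B p q * (Sa i q p * (mx i * star (mx i))) := sum_swap3 _
      _ = ∑ i, star (mx i) * ((B * Sa i).trace * mx i) := by
          refine Finset.sum_congr rfl fun i _ => ?_
          rw [tr_i i]
          simp_rw [Finset.sum_mul, Finset.mul_sum]
          exact Finset.sum_congr rfl fun p _ => Finset.sum_congr rfl fun q _ => by ring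
      _ = star mx ⬝ᵥ ((Matrix.diagonal fun i => (B * Sa i).trace) *ᵥ mx) := by
          simp [dotProduct, Matrix.mulVec_diagonal]
  have t4 : ∑ p, ∑ q, B p q * ∑ i, Sa i q p * Sx i i
      = (Sx * Matrix.diagonal fun i => (B * Sa i).trace).trace := by
    calc ∑ p, ∑ q, B p q * ∑ i, Sa i q p * Sx i i
        = ∑ p, ∑ q, ∑ i, B p q * (Sa i q p * Sx i i) := by simp_rw [Finset.mul_sum]
      _ = ∑ i, ∑ p, ∑ q, B p q * (Sa i q p * Sx i i) := sum_swap3 _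
      _ = ∑ i, Sx i i * (B * Sa i).trace := by
          refine Finset.sum_congr rfl fun i _ => ?_
          rw [tr_i i]
          simp_rw [Finset.mul_sum]
          exact Finset.sum_congr rfl fun p _ => Finset.sum_congr rfl fun q _ => by ring
      _ = (Sx * Matrix.diagonal fun i => (B * Sa i).trace).trace := by
          simp [Matrix.trace, Matrix.diag, Matrix.mul_diagonal, mul_comm]
  have t5 : ∑ p, ∑ q, B p q * ∑ i, ∑ j, star (mA p i) * mA q j * Sx j i
      = (Sx * (mAᴴ * B * mA)).trace := by
    have e1 : (Sx * (mAᴴ * B * mA)).trace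
        = ∑ j, ∑ i, Sx j i * ∑ q, (∑ p, star (mA p i) * B p q) * mA q j := by
      simp only [Matrix.trace, Matrix.diag, Matrix.mul_apply, Matrix.conjTranspose_apply]
    rw [e1]
    calc ∑ p, ∑ q, B p q * ∑ i, ∑ j, star (mA p i) * mA q j * Sx j i
        = ∑ p, ∑ q, ∑ i, ∑ j, B p q * (star (mA p i) * mA q j * Sx j i) := by
          simp_rw [Finset.mul_sum]
      _ = ∑ i, ∑ p, ∑ q, ∑ j, B p q * (star (mA p i) * mA q j * Sx j i) := by
          rw [sum_swap3 (f := fun p q i => ∑ j, B p q * (star (mA p i) * mA q j * Sx j i))]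
      _ = ∑ i, ∑ j, ∑ p, ∑ q, B p q * (star (mA p i) * mA q j * Sx j i) := by
          exact Finset.sum_congr rfl fun i _ =>
            sum_swap3 (f := fun p q j => B p q * (star (mA p i) * mA q j * Sx j i))
      _ = ∑ j, ∑ i, Sx j i * ∑ q, (∑ p, star (mA p i) * B p q) * mA q j := by
          rw [Finset.sum_comm]
          refine Finset.sum_congr rfl fun j _ => Finset.sum_congr rfl fun i _ => ?_
          simp_rw [Finset.sum_mul, Finset.mul_sum]
          rw [Finset.sum_comm]
          exact Finset.sum_congr rfl fun p _ => Finset.sum_congr rfl fun q _ => by ring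
  have split : ∀ (p q : Fin m),
      B p q * (star (my p - ∑ i, mA p i * mx i) * (my q - ∑ j, mA q j * mx j) + Sy q p
        + (∑ i, Sa i q p * (Sx i i + mx i * star (mx i)))
        + ∑ i, ∑ j, star (mA p i) * mA q j * Sx j i)
      = B p q * (star (my p - ∑ i, mA p i * mx i) * (my q - ∑ j, mA q j * mx j))
        + B p q * Sy q p
        + B p q * (∑ i, Sa i q p * Sx i i)
        + B p q * (∑ i, Sa i q p * (mx i * star (mx i)))
        + B p q * (∑ i, ∑ j, star (mA p i) * mA q j * Sx j i) := by
    intro p q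
    have : ∑ i, Sa i q p * (Sx i i + mx i * star (mx i))
        = (∑ i, Sa i q p * Sx i i) + ∑ i, Sa i q p * (mx i * star (mx i)) := by
      rw [← Finset.sum_add_distrib]
      exact Finset.sum_congr rfl fun i _ => by ring
    rw [this]; ring
  simp_rw [split, Finset.sum_add_distrib]
  rw [← t1, ← t2, t3, t4, t5]
  ring

end MatrixAlg


section Main
set_option maxHeartbeats 1000000

lemma main_calc {m n : ℕ} {Ω : Type*} [MeasurableSpace Ω]
    (P : Measure Ω) [IsProbabilityMeasure P]
    (A : Ω → Matrix (Fin m) (Fin n) ℂ) (y : Ω → Fin m → ℂ) (x : Ω → Fin n → ℂ)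
    (hA2 : ∀ p i, MemLp (fun ω => A ω p i) 2 P)
    (hy2 : ∀ p, MemLp (fun ω => y ω p) 2 P)
    (hx2 : ∀ i, MemLp (fun ω => x ω i) 2 P)
    (hIAx : IndepFun A x P)
    (hIAxy : IndepFun (fun ω => (A ω, x ω)) y P)
    (hcols2 : ∀ i j : Fin n, i ≠ j →
      IndepFun (fun ω => fun p => A ω p i) (fun ω => fun p => A ω p j) P)
    (B : Matrix (Fin m) (Fin m) ℂ)
    (mA : Matrix (Fin m) (Fin n) ℂ) (hmA : mA = Matrix.of fun p i => ∫ ω, A ω p i ∂P)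
    (my : Fin m → ℂ) (hmy : my = fun p => ∫ ω, y ω p ∂P)
    (mx : Fin n → ℂ) (hmx : mx = fun i => ∫ ω, x ω i ∂P)
    (Sa : Fin n → Matrix (Fin m) (Fin m) ℂ)
    (hSa : ∀ i, Sa i = Matrix.of fun p q =>
      ∫ ω, (A ω p i - mA p i) * star (A ω q i - mA q i) ∂P)
    (Sy : Matrix (Fin m) (Fin m) ℂ)
    (hSy : Sy = Matrix.of fun p q => ∫ ω, (y ω p - my p) * star (y ω q - my q) ∂P)
    (Sx : Matrix (Fin n) (Fin n) ℂ)
    (hSx : Sx = Matrix.of fun i j => ∫ ω, (x ω i - mx i) * star (x ω j - mx j) ∂P)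
    (D : Matrix (Fin n) (Fin n) ℂ) (hD : D = Matrix.diagonal fun i => (B * Sa i).trace) :
    ∫ ω, star (y ω - A ω *ᵥ x ω) ⬝ᵥ (B *ᵥ (y ω - A ω *ᵥ x ω)) ∂P =
      star (my - mA *ᵥ mx) ⬝ᵥ (B *ᵥ (my - mA *ᵥ mx)) + (B * Sy).trace +
        star mx ⬝ᵥ (D *ᵥ mx) + (Sx * D).trace + (Sx * (mAᴴ * B * mA)).trace := by
  classical
  -- measurability of coordinate maps
  have mevA : ∀ (p : Fin m) (i : Fin n),
      Measurable (fun M : Matrix (Fin m) (Fin n) ℂ => M p i) :=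
    fun p i => (measurable_pi_apply i).comp (measurable_pi_apply p)
  have mevm : ∀ p : Fin m, Measurable (fun v : Fin m → ℂ => v p) :=
    fun p => measurable_pi_apply p
  have mevn : ∀ i : Fin n, Measurable (fun v : Fin n → ℂ => v i) :=
    fun i => measurable_pi_apply i
  have mstar : Measurable (fun z : ℂ => star z) := continuous_star.measurable
  -- basic integrabilities
  have iY : ∀ p, Integrable (fun ω => y ω p) P := fun p => (hy2 p).integrable one_le_two
  have iYs : ∀ p, Integrable (fun ω => star (y ω p)) P :=
    fun p => (l2_conj (hy2 p)).integrable one_le_two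
  have iX : ∀ i, Integrable (fun ω => x ω i) P := fun i => (hx2 i).integrable one_le_two
  have iA : ∀ p i, Integrable (fun ω => A ω p i) P :=
    fun p i => (hA2 p i).integrable one_le_two
  have iAs : ∀ p i, Integrable (fun ω => star (A ω p i)) P :=
    fun p i => (l2_conj (hA2 p i)).integrable one_le_two
  have iAx : ∀ (q : Fin m) (j : Fin n), Integrable (fun ω => A ω q j * x ω j) P :=
    fun q j => l2_mul_integrable (hA2 q j) (hx2 j)
  have iAsxs : ∀ (p : Fin m) (i : Fin n),
      Integrable (fun ω => star (A ω p i) * star (x ω i)) P :=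
    fun p i => l2_mul_integrable (l2_conj (hA2 p i)) (l2_conj (hx2 i))
  have iAsA : ∀ (p q : Fin m) (i j : Fin n),
      Integrable (fun ω => star (A ω p i) * A ω q j) P :=
    fun p q i j => l2_mul_integrable (l2_conj (hA2 p i)) (hA2 q j)
  have iXsX : ∀ (i j : Fin n), Integrable (fun ω => star (x ω i) * x ω j) P :=
    fun i j => l2_mul_integrable (l2_conj (hx2 i)) (hx2 j)
  have intyy : ∀ p q, Integrable (fun ω => star (y ω p) * y ω q) P :=
    fun p q => l2_mul_integrable (l2_conj (hy2 p)) (hy2 q)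
  -- independence-based integrabilities
  have indyAx : ∀ (p q : Fin m) (j : Fin n),
      IndepFun (fun ω => star (y ω p)) (fun ω => A ω q j * x ω j) P := by
    intro p q j
    exact (hIAxy.comp (φ := fun z : Matrix (Fin m) (Fin n) ℂ × (Fin n → ℂ) => z.1 q j * z.2 j)
      (ψ := fun v : Fin m → ℂ => star (v p))
      (((mevA q j).comp measurable_fst).mul ((mevn j).comp measurable_snd))
      (mstar.comp (mevm p))).symm
  have indAxy : ∀ (p : Fin m) (i : Fin n) (q : Fin m),
      IndepFun (fun ω => star (A ω p i) * star (x ω i)) (fun ω => y ω q) P := by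
    intro p i q
    exact hIAxy.comp
      (φ := fun z : Matrix (Fin m) (Fin n) ℂ × (Fin n → ℂ) => star (z.1 p i) * star (z.2 i))
      (ψ := fun v : Fin m → ℂ => v q)
      ((mstar.comp ((mevA p i).comp measurable_fst)).mul (mstar.comp ((mevn i).comp measurable_snd)))
      (mevm q)
  have indAAxx : ∀ (p q : Fin m) (i j : Fin n),
      IndepFun (fun ω => star (A ω p i) * A ω q j) (fun ω => star (x ω i) * x ω j) P := by
    intro p q i j
    exact hIAx.comp
      (φ := fun M : Matrix (Fin m) (Fin n) ℂ => star (M p i) * M q j)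
      (ψ := fun v : Fin n → ℂ => star (v i) * v j)
      ((mstar.comp (mevA p i)).mul (mevA q j)) ((mstar.comp (mevn i)).mul (mevn j))
  have indAx1 : ∀ (q : Fin m) (j : Fin n),
      IndepFun (fun ω => A ω q j) (fun ω => x ω j) P :=
    fun q j => hIAx.comp (mevA q j) (mevn j)
  have indAsxs : ∀ (p : Fin m) (i : Fin n),
      IndepFun (fun ω => star (A ω p i)) (fun ω => star (x ω i)) P :=
    fun p i => hIAx.comp (mstar.comp (mevA p i)) (mstar.comp (mevn i))
  have intyAx : ∀ (p q : Fin m) (j : Fin n),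
      Integrable (fun ω => star (y ω p) * (A ω q j * x ω j)) P :=
    fun p q j => (indyAx p q j).integrable_mul (iYs p) (iAx q j)
  have intAxy : ∀ (p : Fin m) (i : Fin n) (q : Fin m),
      Integrable (fun ω => star (A ω p i) * star (x ω i) * y ω q) P :=
    fun p i q => (indAxy p i q).integrable_mul (iAsxs p i) (iY q)
  have intAAxx : ∀ (p q : Fin m) (i j : Fin n),
      Integrable (fun ω => star (A ω p i) * A ω q j * (star (x ω i) * x ω j)) P :=
    fun p q i j => (indAAxx p q i j).integrable_mul (iAsA p q i j) (iXsX i j)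
  -- mean identities
  have hmAe : ∀ p i, mA p i = ∫ ω, A ω p i ∂P := by intro p i; rw [hmA]; rfl
  have hmye : ∀ p, my p = ∫ ω, y ω p ∂P := by intro p; rw [hmy]
  have hmxe : ∀ i, mx i = ∫ ω, x ω i ∂P := by intro i; rw [hmx]
  -- second moments
  have Eyy : ∀ p q, (∫ ω, star (y ω p) * y ω q ∂P) = Sy q p + my q * star (my p) := by
    intro p q
    exact moment2 (hy2 q) (hy2 p) (hmye q) (hmye p) (by rw [hSy]; rfl)
  have Exx : ∀ i j, (∫ ω, star (x ω i) * x ω j ∂P) = Sx j i + mx j * star (mx i) := by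
    intro i j
    exact moment2 (hx2 j) (hx2 i) (hmxe j) (hmxe i) (by rw [hSx]; rfl)
  have EyAx : ∀ (p q : Fin m) (j : Fin n),
      (∫ ω, star (y ω p) * (A ω q j * x ω j) ∂P) = star (my p) * (mA q j * mx j) := by
    intro p q j
    rw [indep_integral_mul (indyAx p q j) (iYs p) (iAx q j),
      integral_star_eq (hmye p),
      indep_integral_mul (indAx1 q j) (iA q j) (iX j), ← hmAe, ← hmxe]
  have ExAy : ∀ (p : Fin m) (i : Fin n) (q : Fin m),
      (∫ ω, star (A ω p i) * star (x ω i) * y ω q ∂P)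
        = star (mA p i) * star (mx i) * my q := by
    intro p i q
    rw [indep_integral_mul (indAxy p i q) (iAsxs p i) (iY q),
      indep_integral_mul (indAsxs p i) (iAs p i) ((l2_conj (hx2 i)).integrable one_le_two),
      integral_star_eq (hmAe p i), integral_star_eq (hmxe i), ← hmye]
  have QAform : ∀ (p q : Fin m) (i j : Fin n),
      (∫ ω, star (A ω p i) * A ω q j ∂P)
        = star (mA p i) * mA q j + ite (i = j) (Sa i q p) 0 := by
    intro p q i j
    by_cases hij : i = j
    · subst hij
      rw [moment2 (S := Sa i q p) (hA2 q i) (hA2 p i) (hmAe q i) (hmAe p i) (by rw [hSa i]; rfl)]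
      simp only [if_true, eq_self_iff_true]
      ring
    · have hind : IndepFun (fun ω => star (A ω p i)) (fun ω => A ω q j) P :=
        (hcols2 i j hij).comp (φ := fun v : Fin m → ℂ => star (v p))
          (ψ := fun v : Fin m → ℂ => v q) (mstar.comp (mevm p)) (mevm q)
      rw [indep_integral_mul hind (iAs p i) (iA q j), integral_star_eq (hmAe p i),
        ← hmAe, if_neg hij, add_zero]
  have EAAxx : ∀ (p q : Fin m) (i j : Fin n),
      (∫ ω, star (A ω p i) * A ω q j * (star (x ω i) * x ω j) ∂P)
        = (star (mA p i) * mA q j + ite (i = j) (Sa i q p) 0)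
          * (Sx j i + mx j * star (mx i)) := by
    intro p q i j
    rw [indep_integral_mul (indAAxx p q i j) (iAsA p q i j) (iXsX i j),
      QAform p q i j, Exx i j]
  -- pointwise expansion
  have exp1 : ∀ (p q : Fin m) (ω : Ω),
      star (y ω p - ∑ i, A ω p i * x ω i) * (y ω q - ∑ j, A ω q j * x ω j)
        = star (y ω p) * y ω q
          - (∑ j, star (y ω p) * (A ω q j * x ω j))
          - ((∑ i, star (A ω p i) * star (x ω i) * y ω q)
            - ∑ i, ∑ j, star (A ω p i) * A ω q j * (star (x ω i) * x ω j)) := by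
    intro p q ω
    have e3 : star (y ω p - ∑ i, A ω p i * x ω i)
        = star (y ω p) - ∑ i, star (A ω p i) * star (x ω i) := by
      rw [star_sub, star_sum]
      simp only [star_mul']
    have h4 : (∑ i, star (A ω p i) * star (x ω i)) * (∑ j, A ω q j * x ω j)
        = ∑ i, ∑ j, star (A ω p i) * A ω q j * (star (x ω i) * x ω j) := by
      rw [Finset.sum_mul_sum]
      exact Finset.sum_congr rfl fun i _ => Finset.sum_congr rfl fun j _ => by ring
    rw [e3, sub_mul, mul_sub, mul_sub, Finset.mul_sum, Finset.sum_mul, h4]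
  -- integrability of the residual product
  have intrr : ∀ (p q : Fin m), Integrable
      (fun ω => star (y ω p - ∑ i, A ω p i * x ω i) * (y ω q - ∑ j, A ω q j * x ω j)) P := by
    intro p q
    have I2 : Integrable (fun ω => ∑ j, star (y ω p) * (A ω q j * x ω j)) P :=
      integrable_finset_sum _ fun j _ => intyAx p q j
    have I3 : Integrable (fun ω => ∑ i, star (A ω p i) * star (x ω i) * y ω q) P :=
      integrable_finset_sum _ fun i _ => intAxy p i q
    have I4 : Integrable
        (fun ω => ∑ i, ∑ j, star (A ω p i) * A ω q j * (star (x ω i) * x ω j)) P :=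
      integrable_finset_sum _ fun i _ => integrable_finset_sum _ fun j _ => intAAxx p q i j
    exact Integrable.congr (((intyy p q).sub I2).sub (I3.sub I4))
      (Filter.Eventually.of_forall fun ω => (exp1 p q ω).symm)
  -- the key per-entry computation
  have key : ∀ (p q : Fin m),
      (∫ ω, star (y ω p - ∑ i, A ω p i * x ω i) * (y ω q - ∑ j, A ω q j * x ω j) ∂P)
        = star (my p - ∑ i, mA p i * mx i) * (my q - ∑ j, mA q j * mx j) + Sy q p
          + (∑ i, Sa i q p * (Sx i i + mx i * star (mx i)))
          + ∑ i, ∑ j, star (mA p i) * mA q j * Sx j i := by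
    intro p q
    rw [integral_congr_ae (Filter.Eventually.of_forall (exp1 p q))]
    have I2 : Integrable (fun ω => ∑ j, star (y ω p) * (A ω q j * x ω j)) P :=
      integrable_finset_sum _ fun j _ => intyAx p q j
    have I3 : Integrable (fun ω => ∑ i, star (A ω p i) * star (x ω i) * y ω q) P :=
      integrable_finset_sum _ fun i _ => intAxy p i q
    have I4 : Integrable
        (fun ω => ∑ i, ∑ j, star (A ω p i) * A ω q j * (star (x ω i) * x ω j)) P :=
      integrable_finset_sum _ fun i _ => integrable_finset_sum _ fun j _ => intAAxx p q i j
    have I12 : Integrable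
        (fun ω => star (y ω p) * y ω q - ∑ j, star (y ω p) * (A ω q j * x ω j)) P :=
      (intyy p q).sub I2
    have I34 : Integrable
        (fun ω => (∑ i, star (A ω p i) * star (x ω i) * y ω q)
          - ∑ i, ∑ j, star (A ω p i) * A ω q j * (star (x ω i) * x ω j)) P := I3.sub I4
    rw [integral_sub I12 I34, integral_sub (intyy p q) I2, integral_sub I3 I4,
      integral_finset_sum _ (fun j _ => intyAx p q j),
      integral_finset_sum _ (fun i _ => intAxy p i q),
      integral_finset_sum _ (fun i _ => integrable_finset_sum _ fun j _ => intAAxx p q i j)]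
    have e5 : ∀ i : Fin n, (∫ ω, ∑ j, star (A ω p i) * A ω q j * (star (x ω i) * x ω j) ∂P)
        = ∑ j, (star (mA p i) * mA q j + ite (i = j) (Sa i q p) 0)
            * (Sx j i + mx j * star (mx i)) := by
      intro i
      rw [integral_finset_sum _ (fun j _ => intAAxx p q i j)]
      exact Finset.sum_congr rfl fun j _ => EAAxx p q i j
    rw [Eyy p q]
    rw [Finset.sum_congr rfl fun j _ => EyAx p q j,
      Finset.sum_congr rfl fun i _ => ExAy p i q,
      Finset.sum_congr rfl fun i (_ : i ∈ Finset.univ) => e5 i]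
    exact algebra_key (Sy q p) (my q) (my p) (fun i => mA p i) (fun j => mA q j) mx Sx
      (fun i => Sa i q p)
  -- assemble
  have lhs1 : ∀ ω, star (y ω - A ω *ᵥ x ω) ⬝ᵥ (B *ᵥ (y ω - A ω *ᵥ x ω))
      = ∑ p, ∑ q, B p q
          * (star (y ω p - ∑ i, A ω p i * x ω i) * (y ω q - ∑ j, A ω q j * x ω j)) := by
    intro ω
    have hv : ∀ p, (y ω - A ω *ᵥ x ω) p = y ω p - ∑ i, A ω p i * x ω i := by
      intro p; simp [mulVec, dotProduct]
    rw [quad_expand]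
    exact Finset.sum_congr rfl fun p _ => Finset.sum_congr rfl fun q _ => by rw [hv, hv]
  rw [integral_congr_ae (Filter.Eventually.of_forall lhs1)]
  rw [integral_finset_sum _
    (fun p _ => integrable_finset_sum _ fun q _ => ((intrr p q).const_mul (B p q)))]
  have step2 : ∀ p ∈ Finset.univ, (∫ ω, ∑ q, B p q
        * (star (y ω p - ∑ i, A ω p i * x ω i) * (y ω q - ∑ j, A ω q j * x ω j)) ∂P)
      = ∑ q, B p q * (star (my p - ∑ i, mA p i * mx i) * (my q - ∑ j, mA q j * mx j) + Sy q p
          + (∑ i, Sa i q p * (Sx i i + mx i * star (mx i)))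
          + ∑ i, ∑ j, star (mA p i) * mA q j * Sx j i) := by
    intro p _
    rw [integral_finset_sum _ (fun q _ => (intrr p q).const_mul (B p q))]
    refine Finset.sum_congr rfl fun q _ => ?_
    rw [integral_const_mul, key p q]
  rw [Finset.sum_congr rfl step2]
  exact final_matrix B mA my mx Sa Sy Sx D hD

/-- Theorem 1: for mutually independent `A`, `y`, `x` (with the columns of `A` also
mutually independent) with square-integrable entries, and a Hermitian matrix `B`,
`E[(y − Ax)^H B (y − Ax)] = (⟨y⟩ − ⟨A⟩⟨x⟩)^H B (⟨y⟩ − ⟨A⟩⟨x⟩) + Tr(B Σ_y)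
  + ⟨x⟩^H D ⟨x⟩ + Tr(Σ_x D) + Tr(Σ_x ⟨A⟩^H B ⟨A⟩)`,
where `D = diag(Tr(B Σ_{a_1}), …, Tr(B Σ_{a_n}))`. -/
theorem expectation_residual_quadratic_form {m n : ℕ} {Ω : Type*} [MeasurableSpace Ω]
    (P : Measure Ω) [IsProbabilityMeasure P]
    (A : Ω → Matrix (Fin m) (Fin n) ℂ) (y : Ω → Fin m → ℂ) (x : Ω → Fin n → ℂ)
    (hA2 : ∀ p i, MemLp (fun ω => A ω p i) 2 P)
    (hy2 : ∀ p, MemLp (fun ω => y ω p) 2 P)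
    (hx2 : ∀ i, MemLp (fun ω => x ω i) 2 P)
    (hIndep : iIndep
      ![MeasurableSpace.comap A inferInstance, MeasurableSpace.comap y inferInstance,
        MeasurableSpace.comap x inferInstance] P)
    (hcols : iIndepFun
      (fun i : Fin n => fun ω p => A ω p i) P)
    (B : Matrix (Fin m) (Fin m) ℂ) (hB : B.IsHermitian)
    (mA : Matrix (Fin m) (Fin n) ℂ) (hmA : mA = Matrix.of fun p i => ∫ ω, A ω p i ∂P)
    (my : Fin m → ℂ) (hmy : my = fun p => ∫ ω, y ω p ∂P)
    (mx : Fin n → ℂ) (hmx : mx = fun i => ∫ ω, x ω i ∂P)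
    (Sa : Fin n → Matrix (Fin m) (Fin m) ℂ)
    (hSa : ∀ i, Sa i = Matrix.of fun p q =>
      ∫ ω, (A ω p i - mA p i) * star (A ω q i - mA q i) ∂P)
    (Sy : Matrix (Fin m) (Fin m) ℂ)
    (hSy : Sy = Matrix.of fun p q => ∫ ω, (y ω p - my p) * star (y ω q - my q) ∂P)
    (Sx : Matrix (Fin n) (Fin n) ℂ)
    (hSx : Sx = Matrix.of fun i j => ∫ ω, (x ω i - mx i) * star (x ω j - mx j) ∂P)
    (D : Matrix (Fin n) (Fin n) ℂ) (hD : D = Matrix.diagonal fun i => (B * Sa i).trace) :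
    ∫ ω, star (y ω - A ω *ᵥ x ω) ⬝ᵥ (B *ᵥ (y ω - A ω *ᵥ x ω)) ∂P =
      star (my - mA *ᵥ mx) ⬝ᵥ (B *ᵥ (my - mA *ᵥ mx)) + (B * Sy).trace +
        star mx ⬝ᵥ (D *ᵥ mx) + (Sx * D).trace + (Sx * (mAᴴ * B * mA)).trace := by
  classical
  -- measurable modifications
  set A' : Ω → Matrix (Fin m) (Fin n) ℂ :=
    fun ω => Matrix.of fun p i => (hA2 p i).1.mk _ ω with hA'def
  set y' : Ω → Fin m → ℂ := fun ω p => (hy2 p).1.mk _ ω with hy'def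
  set x' : Ω → Fin n → ℂ := fun ω i => (hx2 i).1.mk _ ω with hx'def
  have hA'meas : Measurable A' :=
    measurable_pi_lambda _ fun p => measurable_pi_lambda _ fun i =>
      (hA2 p i).1.stronglyMeasurable_mk.measurable
  have hy'meas : Measurable y' :=
    measurable_pi_lambda _ fun p => (hy2 p).1.stronglyMeasurable_mk.measurable
  have hx'meas : Measurable x' :=
    measurable_pi_lambda _ fun i => (hx2 i).1.stronglyMeasurable_mk.measurable
  have haeA : ∀ p i, (fun ω => A ω p i) =ᵐ[P] fun ω => A' ω p i :=
    fun p i => (hA2 p i).1.ae_eq_mk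
  have haey : ∀ p, (fun ω => y ω p) =ᵐ[P] fun ω => y' ω p := fun p => (hy2 p).1.ae_eq_mk
  have haex : ∀ i, (fun ω => x ω i) =ᵐ[P] fun ω => x' ω i := fun i => (hx2 i).1.ae_eq_mk
  have haeAfun : A =ᵐ[P] A' := by
    have h : ∀ᵐ ω ∂P, ∀ (p : Fin m) (i : Fin n), A ω p i = A' ω p i := by
      rw [MeasureTheory.ae_all_iff]
      intro p
      rw [MeasureTheory.ae_all_iff]
      exact fun i => haeA p i
    filter_upwards [h] with ω hω
    exact Matrix.ext fun p i => hω p i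
  have haeyfun : y =ᵐ[P] y' := by
    have h : ∀ᵐ ω ∂P, ∀ (p : Fin m), y ω p = y' ω p := by
      rw [MeasureTheory.ae_all_iff]; exact fun p => haey p
    filter_upwards [h] with ω hω
    exact funext fun p => hω p
  have haexfun : x =ᵐ[P] x' := by
    have h : ∀ᵐ ω ∂P, ∀ (i : Fin n), x ω i = x' ω i := by
      rw [MeasureTheory.ae_all_iff]; exact fun i => haex i
    filter_upwards [h] with ω hω
    exact funext fun i => hω i
  have hA2' : ∀ p i, MemLp (fun ω => A' ω p i) 2 P := fun p i => (hA2 p i).ae_eq (haeA p i)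
  have hy2' : ∀ p, MemLp (fun ω => y' ω p) 2 P := fun p => (hy2 p).ae_eq (haey p)
  have hx2' : ∀ i, MemLp (fun ω => x' ω i) 2 P := fun i => (hx2 i).ae_eq (haex i)
  -- transfer the independence structure to the modifications
  have hIndep' : iIndep
      ![MeasurableSpace.comap A' inferInstance, MeasurableSpace.comap y' inferInstance,
        MeasurableSpace.comap x' inferInstance] P := by
    apply iIndep_congr_ae hIndep
    intro i s hs
    fin_cases i
    · exact set_ae_of_comap haeAfun hs
    · exact set_ae_of_comap haeyfun hs
    · exact set_ae_of_comap haexfun hs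
  have h_le : ∀ i : Fin 3,
      (![MeasurableSpace.comap A' inferInstance, MeasurableSpace.comap y' inferInstance,
        MeasurableSpace.comap x' inferInstance] : Fin 3 → MeasurableSpace Ω) i
        ≤ ‹MeasurableSpace Ω› := by
    intro i
    fin_cases i
    · exact measurable_iff_comap_le.1 hA'meas
    · exact measurable_iff_comap_le.1 hy'meas
    · exact measurable_iff_comap_le.1 hx'meas
  have hIAx' : IndepFun A' x' P := hIndep'.indep (show (0 : Fin 3) ≠ 2 by decide)
  have hsup : Indep
      (MeasurableSpace.comap A' inferInstance ⊔ MeasurableSpace.comap x' inferInstance)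
      (MeasurableSpace.comap y' inferInstance) P := by
    have h := indep_iSup_of_disjoint h_le hIndep'
      (S := {0, 2}) (T := {1}) (by simp [Set.disjoint_left])
    have e1 : (⨆ i ∈ ({0, 2} : Set (Fin 3)),
        (![MeasurableSpace.comap A' inferInstance, MeasurableSpace.comap y' inferInstance,
          MeasurableSpace.comap x' inferInstance] : Fin 3 → MeasurableSpace Ω) i)
        = MeasurableSpace.comap A' inferInstance ⊔ MeasurableSpace.comap x' inferInstance := by
      rw [iSup_insert, iSup_singleton]
      rfl
    have e2 : (⨆ i ∈ ({1} : Set (Fin 3)),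
        (![MeasurableSpace.comap A' inferInstance, MeasurableSpace.comap y' inferInstance,
          MeasurableSpace.comap x' inferInstance] : Fin 3 → MeasurableSpace Ω) i)
        = MeasurableSpace.comap y' inferInstance := by
      rw [iSup_singleton]
      rfl
    rw [e1, e2] at h
    exact h
  have hIAxy' : IndepFun (fun ω => (A' ω, x' ω)) y' P := by
    have hpair : MeasurableSpace.comap (fun ω => (A' ω, x' ω))
          (inferInstance : MeasurableSpace (Matrix (Fin m) (Fin n) ℂ × (Fin n → ℂ)))
        = MeasurableSpace.comap A' inferInstance ⊔ MeasurableSpace.comap x' inferInstance := by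
      show MeasurableSpace.comap (fun ω => (A' ω, x' ω))
        (MeasurableSpace.comap Prod.fst inferInstance
          ⊔ MeasurableSpace.comap Prod.snd inferInstance) = _
      rw [MeasurableSpace.comap_sup, MeasurableSpace.comap_comp, MeasurableSpace.comap_comp]
      rfl
    show ProbabilityTheory.Indep _ _ P
    rw [hpair]
    exact hsup
  have hcols2' : ∀ i j : Fin n, i ≠ j →
      IndepFun (fun ω => fun p => A' ω p i) (fun ω => fun p => A' ω p j) P := by
    intro i j hij
    have hcol : ∀ k : Fin n, (fun ω => fun p => A ω p k) =ᵐ[P] fun ω => fun p => A' ω p k := by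
      intro k
      filter_upwards [haeAfun] with ω hω
      funext p
      rw [hω]
    exact (hcols.indepFun hij).congr (hcol i) (hcol j)
  -- transfer the constants
  have hmA' : mA = Matrix.of fun p i => ∫ ω, A' ω p i ∂P := by
    rw [hmA]
    exact congrArg Matrix.of (funext fun p => funext fun i => integral_congr_ae (haeA p i))
  have hmy' : my = fun p => ∫ ω, y' ω p ∂P := by
    rw [hmy]
    exact funext fun p => integral_congr_ae (haey p)
  have hmx' : mx = fun i => ∫ ω, x' ω i ∂P := by
    rw [hmx]
    exact funext fun i => integral_congr_ae (haex i)
  have hSa' : ∀ i, Sa i = Matrix.of fun p q =>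
      ∫ ω, (A' ω p i - mA p i) * star (A' ω q i - mA q i) ∂P := by
    intro i
    rw [hSa i]
    refine congrArg Matrix.of (funext fun p => funext fun q => integral_congr_ae ?_)
    filter_upwards [haeA p i, haeA q i] with ω h1 h2
    rw [h1, h2]
  have hSy' : Sy = Matrix.of fun p q =>
      ∫ ω, (y' ω p - my p) * star (y' ω q - my q) ∂P := by
    rw [hSy]
    refine congrArg Matrix.of (funext fun p => funext fun q => integral_congr_ae ?_)
    filter_upwards [haey p, haey q] with ω h1 h2
    rw [h1, h2]
  have hSx' : Sx = Matrix.of fun i j =>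
      ∫ ω, (x' ω i - mx i) * star (x' ω j - mx j) ∂P := by
    rw [hSx]
    refine congrArg Matrix.of (funext fun i => funext fun j => integral_congr_ae ?_)
    filter_upwards [haex i, haex j] with ω h1 h2
    rw [h1, h2]
  have hLHS : ∫ ω, star (y ω - A ω *ᵥ x ω) ⬝ᵥ (B *ᵥ (y ω - A ω *ᵥ x ω)) ∂P
      = ∫ ω, star (y' ω - A' ω *ᵥ x' ω) ⬝ᵥ (B *ᵥ (y' ω - A' ω *ᵥ x' ω)) ∂P := by
    refine integral_congr_ae ?_
    filter_upwards [haeAfun, haeyfun, haexfun] with ω h1 h2 h3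
    rw [h1, h2, h3]
  rw [hLHS]
  exact main_calc P A' y' x' hA2' hy2' hx2' hIAx' hIAxy' hcols2' B mA hmA' my hmy' mx hmx'
    Sa hSa' Sy hSy' Sx hSx' D hD
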